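/- arXiv:1403.2360 — 2 statements merged into one kernel-verified Lean document; each statement's English description precedes it below -/
import Mathlib

section
/- The matching produced by the user-proposing deferred acceptance algorithm in a many-to-one matching game with quotas and strict preferences is stable: there is no pair (m, l) such that m prefers l to μ(m) and l prefers m to some member of μ(l) (or |μ(l)| < q_l and m is acceptable to l). -/
open scoped Classical

/-- A many-to-one matching market: quotas, users' strict preference lists
(acceptable BSs in decreasing order of preference), and BSs' strict rankings
of users (lower rank = more preferred). -/
structure Market (M L : Type*) where
  quota : L → ℕ
  uPref : M → List L
  bRank : L → M → ℕ

namespace Market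

variable {M L : Type*} [Fintype M] [Fintype L]

/-- User `m` strictly prefers BS `l` to BS `l'`. -/
noncomputable def uPrefers (mk : Market M L) (m : M) (l l' : L) : Prop :=
  l ∈ mk.uPref m ∧
    (mk.uPref m).findIdx (fun x => decide (x = l)) <
      (mk.uPref m).findIdx (fun x => decide (x = l'))

/-- Keep the (up to) `q` best-ranked members of `s`. -/
noncomputable def topQ (q : ℕ) (rank : M → ℕ) (s : Finset M) : Finset M :=
  s.filter (fun m => (s.filter (fun m' => rank m' < rank m)).card < q)

/-- State of the deferred acceptance algorithm: for each user, the set of BSs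
it has already proposed to, and for each BS, the set of users it tentatively holds. -/
structure DAState (M L : Type*) where
  proposed : M → Finset L
  hold : L → Finset M

/-- The most preferred BS that user `m` has not yet proposed to. -/
noncomputable def nextProposal (mk : Market M L) (s : DAState M L) (m : M) : Option L :=
  (mk.uPref m).find? (fun l => decide (l ∉ s.proposed m))

/-- A user is (tentatively) matched if some BS holds it. -/
def matched (s : DAState M L) (m : M) : Prop := ∃ l, m ∈ s.hold l

/-- Users proposing to BS `l` in the current round. -/
noncomputable def proposalsTo (mk : Market M L) (s : DAState M L) (l : L) : Finset M :=
  Finset.univ.filter (fun m => ¬ matched s m ∧ nextProposal mk s m = some l)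

/-- One round of user-proposing deferred acceptance: every unmatched user proposes
to its most preferred BS not yet proposed to; every BS keeps the best applicants
up to its quota (among current holds and new proposers) and rejects the rest. -/
noncomputable def step (mk : Market M L) (s : DAState M L) : DAState M L where
  proposed := fun m =>
    if matched s m then s.proposed m
    else
      match nextProposal mk s m with
      | some l => insert l (s.proposed m)
      | none => s.proposed m
  hold := fun l => topQ (mk.quota l) (mk.bRank l) (s.hold l ∪ proposalsTo mk s l)

/-- The run of the deferred acceptance algorithm from the empty initial state. -/
noncomputable def run (mk : Market M L) : ℕ → DAState M L
  | 0 => ⟨fun _ => ∅, fun _ => ∅⟩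
  | n + 1 => step mk (run mk n)

/-- `μ` is a feasible many-to-one matching: quotas respected, each user assigned
to at most one BS. -/
def IsMatching (mk : Market M L) (μ : L → Finset M) : Prop :=
  (∀ l, (μ l).card ≤ mk.quota l) ∧ ∀ m l l', m ∈ μ l → m ∈ μ l' → l = l'

/-- Individual rationality: every user is assigned only to an acceptable BS. -/
def IndivRational (mk : Market M L) (μ : L → Finset M) : Prop :=
  ∀ l m, m ∈ μ l → l ∈ mk.uPref m

/-- `(m, l)` is a blocking pair for `μ`: `l` is acceptable to `m`, `m` is not
assigned to `l` and strictly prefers `l` to its assignment (if any), and `l`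
either has a free slot or strictly prefers `m` to one of its assigned users. -/
def Blocks (mk : Market M L) (μ : L → Finset M) (m : M) (l : L) : Prop :=
  l ∈ mk.uPref m ∧ m ∉ μ l ∧ (∀ l', m ∈ μ l' → mk.uPrefers m l l') ∧
    ((μ l).card < mk.quota l ∨ ∃ m' ∈ μ l, mk.bRank l m < mk.bRank l m')

/-- Stability: feasible, individually rational, and no blocking pair. -/
def IsStable (mk : Market M L) (μ : L → Finset M) : Prop :=
  IsMatching mk μ ∧ IndivRational mk μ ∧ ∀ m l, ¬ Blocks mk μ m l

end Market


section Aux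
variable {M : Type*}

noncomputable def rkc (r : M → ℕ) (s : Finset M) (x : M) : ℕ :=
  (s.filter (fun y => r y < r x)).card

lemma rkc_lt (r : M → ℕ) (s : Finset M) {x : M} (hx : x ∈ s) : rkc r s x < s.card :=
  Finset.card_lt_card (Finset.filter_ssubset.2 ⟨x, hx, by simp⟩)

lemma rkc_strictMono (r : M → ℕ) (s : Finset M) {x y : M} (hx : x ∈ s)
    (hxy : r x < r y) : rkc r s x < rkc r s y := by
  apply Finset.card_lt_card
  constructor
  · intro z hz
    simp only [Finset.mem_filter] at hz ⊢
    exact ⟨hz.1, hz.2.trans hxy⟩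
  · intro hsub
    have : x ∈ s.filter (fun z => r z < r y) := Finset.mem_filter.2 ⟨hx, hxy⟩
    have := hsub this
    simp at this

lemma rkc_injOn (r : M → ℕ) (hr : Function.Injective r) (s : Finset M) :
    Set.InjOn (rkc r s) s := by
  intro x hx y hy hxy
  by_contra hne
  rcases lt_trichotomy (r x) (r y) with h | h | h
  · exact absurd hxy (Nat.ne_of_lt (rkc_strictMono r s hx h))
  · exact hne (hr h)
  · exact absurd hxy.symm (Nat.ne_of_lt (rkc_strictMono r s hy h))

lemma rkc_image (r : M → ℕ) (hr : Function.Injective r) (s : Finset M) :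
    s.image (rkc r s) = Finset.range s.card := by
  apply Finset.eq_of_subset_of_card_le
  · intro y hy
    simp only [Finset.mem_image] at hy
    obtain ⟨x, hx, rfl⟩ := hy
    exact Finset.mem_range.2 (rkc_lt r s hx)
  · rw [Finset.card_range, Finset.card_image_of_injOn (rkc_injOn r hr s)]

lemma Market.topQ_card (q : ℕ) (r : M → ℕ) (hr : Function.Injective r) (s : Finset M) :
    (Market.topQ q r s).card = min q s.card := by
  have hsub : Market.topQ q r s ⊆ s := Finset.filter_subset _ _
  have h1 : (Market.topQ q r s).card = ((Market.topQ q r s).image (rkc r s)).card :=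
    (Finset.card_image_of_injOn ((rkc_injOn r hr s).mono (by exact_mod_cast hsub))).symm
  rw [h1]
  have h2 : (Market.topQ q r s).image (rkc r s) = Finset.range (min q s.card) := by
    ext y
    simp only [Finset.mem_image, Finset.mem_range, lt_min_iff]
    constructor
    · rintro ⟨x, hx, rfl⟩
      have hx' := Finset.mem_filter.1 hx
      exact ⟨hx'.2, rkc_lt r s hx'.1⟩
    · rintro ⟨hyq, hys⟩
      have : y ∈ s.image (rkc r s) := by
        rw [rkc_image r hr s]; exact Finset.mem_range.2 hys
      obtain ⟨x, hx, rfl⟩ := Finset.mem_image.1 this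
      exact ⟨x, Finset.mem_filter.2 ⟨hx, hyq⟩, rfl⟩
  rw [h2, Finset.card_range]

lemma Market.topQ_filter_card (q : ℕ) (r : M → ℕ) (hr : Function.Injective r) (s : Finset M)
    (m : M) (h : q ≤ (s.filter (fun y => r y < r m)).card) :
    q ≤ ((Market.topQ q r s).filter (fun y => r y < r m)).card := by
  set t := s.filter (fun y => r y < r m) with ht
  have hsub : Market.topQ q r t ⊆ (Market.topQ q r s).filter (fun y => r y < r m) := by
    intro x hx
    have hx' := Finset.mem_filter.1 hx
    have hxt := hx'.1
    have hxs : x ∈ s := (Finset.mem_filter.1 hxt).1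
    have hxm : r x < r m := (Finset.mem_filter.1 hxt).2
    have heq : t.filter (fun y => r y < r x) = s.filter (fun y => r y < r x) := by
      rw [ht, Finset.filter_filter]
      ext y
      simp only [Finset.mem_filter]
      constructor
      · rintro ⟨hy, -, h2⟩
        exact ⟨hy, h2⟩
      · rintro ⟨hy, h2⟩
        exact ⟨hy, h2.trans hxm, h2⟩
    refine Finset.mem_filter.2 ⟨Finset.mem_filter.2 ⟨hxs, ?_⟩, hxm⟩
    rw [← heq]; exact hx'.2
  calc q = min q t.card := (min_eq_left h).symm
    _ = (Market.topQ q r t).card := (Market.topQ_card q r hr t).symm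
    _ ≤ _ := Finset.card_le_card hsub

lemma find?_of_idx_lt {L : Type*} [DecidableEq L] :
    ∀ (xs : List L), xs.Nodup → ∀ (p : L → Bool) (l0 l : L),
      xs.find? p = some l0 → l ∈ xs →
      xs.findIdx (fun x => decide (x = l)) < xs.findIdx (fun x => decide (x = l0)) →
      p l = false
  | [] => by simp
  | a :: t => by
    intro hnd p l0 l hfind hl hidx
    by_cases hpa : p a
    · rw [List.find?_cons_of_pos hpa] at hfind
      have : a = l0 := by simpa using hfind
      subst this
      simp [List.findIdx_cons] at hidx
    · rw [List.find?_cons_of_neg hpa] at hfind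
      have hl0t : l0 ∈ t := List.mem_of_find?_eq_some hfind
      have hal0 : a ≠ l0 := fun h => (List.nodup_cons.1 hnd).1 (h ▸ hl0t)
      by_cases hla : l = a
      · subst hla; exact Bool.eq_false_iff.2 hpa
      · have hlt : l ∈ t := by
          rcases List.mem_cons.1 hl with h | h
          · exact absurd h hla
          · exact h
        rw [List.findIdx_cons, List.findIdx_cons] at hidx
        have h1 : (decide (a = l)) = false := by simp [Ne.symm hla]
        have h2 : (decide (a = l0)) = false := by simp [hal0]
        rw [h1, h2] at hidx
        simp only [cond_false] at hidx
        exact find?_of_idx_lt t (List.nodup_cons.1 hnd).2 p l0 l hfind hlt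
          (Nat.lt_of_succ_lt_succ hidx)

end Aux

section Invariant
set_option linter.unusedSectionVars false

open Market

variable {M L : Type*} [Fintype M] [Fintype L]

omit [Fintype L] in
lemma mem_proposalsTo {mk : Market M L} {s : DAState M L} {m : M} {l : L} :
    m ∈ proposalsTo mk s l ↔ ¬ matched s m ∧ nextProposal mk s m = some l := by
  simp [proposalsTo]

omit [Fintype M] in
lemma mem_topQ {q : ℕ} {r : M → ℕ} {s : Finset M} {x : M} :
    x ∈ topQ q r s ↔ x ∈ s ∧ (s.filter (fun y => r y < r x)).card < q := by
  simp [topQ]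

/-- The combined invariant of the DA run. -/
def DAInv (mk : Market M L) (s : DAState M L) : Prop :=
  (∀ m l l', m ∈ s.hold l → m ∈ s.hold l' → l = l') ∧
  (∀ m l, m ∈ s.hold l → l ∈ s.proposed m) ∧
  (∀ m l, l ∈ s.proposed m → l ∈ mk.uPref m) ∧
  (∀ m l l', l ∈ mk.uPref m → l' ∈ s.proposed m →
      (mk.uPref m).findIdx (fun x => decide (x = l)) <
        (mk.uPref m).findIdx (fun x => decide (x = l')) → l ∈ s.proposed m) ∧
  (∀ m l, l ∈ s.proposed m → m ∉ s.hold l →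
      mk.quota l ≤ ((s.hold l).filter (fun m' => mk.bRank l m' < mk.bRank l m)).card)

lemma daInv_step (mk : Market M L) (hU : ∀ m, (mk.uPref m).Nodup)
    (hB : ∀ l, Function.Injective (mk.bRank l)) (s : DAState M L)
    (h : DAInv mk s) : DAInv mk (step mk s) := by
  obtain ⟨h1, h2, h3, h4, h5⟩ := h
  have hhold : ∀ l, (step mk s).hold l
      = topQ (mk.quota l) (mk.bRank l) (s.hold l ∪ proposalsTo mk s l) := fun l => rfl
  have hprop : ∀ m, (step mk s).proposed m
      = if matched s m then s.proposed m
        else match nextProposal mk s m with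
          | some l => insert l (s.proposed m)
          | none => s.proposed m := fun m => rfl
  -- membership in new hold implies membership in old union
  have hmemu : ∀ m l, m ∈ (step mk s).hold l → m ∈ s.hold l ∪ proposalsTo mk s l := by
    intro m l hm
    rw [hhold] at hm
    exact (mem_topQ.1 hm).1
  -- old proposed is contained in new proposed
  have hmono : ∀ m, s.proposed m ⊆ (step mk s).proposed m := by
    intro m l hl
    rw [hprop]
    split
    · exact hl
    · split
      · exact Finset.mem_insert_of_mem hl
      · exact hl
  refine ⟨?_, ?_, ?_, ?_, ?_⟩
  · -- uniqueness
    intro m l l' hl hl'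
    rcases Finset.mem_union.1 (hmemu m l hl) with hm | hm
    · have hmat : matched s m := ⟨l, hm⟩
      rcases Finset.mem_union.1 (hmemu m l' hl') with hm' | hm'
      · exact h1 m l l' hm hm'
      · exact absurd hmat (mem_proposalsTo.1 hm').1
    · have hunm := (mem_proposalsTo.1 hm).1
      rcases Finset.mem_union.1 (hmemu m l' hl') with hm' | hm'
      · exact absurd ⟨l', hm'⟩ hunm
      · have e1 := (mem_proposalsTo.1 hm).2
        have e2 := (mem_proposalsTo.1 hm').2
        exact Option.some_injective _ (e1.symm.trans e2)
  · -- hold ⊆ proposed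
    intro m l hl
    rcases Finset.mem_union.1 (hmemu m l hl) with hm | hm
    · exact hmono m (h2 m l hm)
    · obtain ⟨hunm, hnext⟩ := mem_proposalsTo.1 hm
      rw [hprop, if_neg hunm, hnext]
      exact Finset.mem_insert_self _ _
  · -- proposed ⊆ uPref
    intro m l hl
    rw [hprop] at hl
    split at hl
    · exact h3 m l hl
    · rename_i heq
      split at hl
      · rename_i l1 hnext
        rcases Finset.mem_insert.1 hl with rfl | hl
        · exact List.mem_of_find?_eq_some hnext
        · exact h3 m l hl
      · exact h3 m l hl
  · -- downward closure
    intro m l l' hl hl' hidx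
    apply hmono
    rw [hprop] at hl'
    split at hl'
    · exact h4 m l l' hl hl' hidx
    · split at hl'
      · rename_i l1 hnext
        rcases Finset.mem_insert.1 hl' with rfl | hl'
        · -- l' = l1 is the fresh proposal; l comes earlier, so already proposed
          have := find?_of_idx_lt (mk.uPref m) (hU m) _ l' l hnext hl hidx
          simpa using this
        · exact h4 m l l' hl hl' hidx
      · exact h4 m l l' hl hl' hidx
  · -- rejection invariant
    intro m l hl hnh
    rw [hhold] at hnh ⊢
    set u := s.hold l ∪ proposalsTo mk s l with hu
    have key : mk.quota l ≤ (u.filter (fun m' => mk.bRank l m' < mk.bRank l m)).card := by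
      by_cases hmu : m ∈ u
      · have := mem_topQ.not.1 hnh
        simp only [hmu, true_and, not_lt] at this
        exact this
      · -- m was not a candidate this round; use old invariant
        have hml : m ∉ s.hold l := fun hmem => hmu (Finset.mem_union_left _ hmem)
        have hmp : m ∉ proposalsTo mk s l := fun hmem => hmu (Finset.mem_union_right _ hmem)
        have hold_l : l ∈ s.proposed m := by
          rw [hprop] at hl
          split at hl
          · exact hl
          · rename_i hunm
            split at hl
            · rename_i l1 hnext
              rcases Finset.mem_insert.1 hl with rfl | hl
              · exact absurd (mem_proposalsTo.2 ⟨hunm, hnext⟩) hmp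
              · exact hl
            · exact hl
        calc mk.quota l ≤ ((s.hold l).filter (fun m' => mk.bRank l m' < mk.bRank l m)).card :=
              h5 m l hold_l hml
          _ ≤ (u.filter (fun m' => mk.bRank l m' < mk.bRank l m)).card :=
              Finset.card_le_card (Finset.filter_subset_filter _ Finset.subset_union_left)
    exact Market.topQ_filter_card (mk.quota l) (mk.bRank l) (hB l) u m key

lemma daInv_run (mk : Market M L) (hU : ∀ m, (mk.uPref m).Nodup)
    (hB : ∀ l, Function.Injective (mk.bRank l)) (n : ℕ) : DAInv mk (run mk n) := by
  induction n with
  | zero =>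
    refine ⟨?_, ?_, ?_, ?_, ?_⟩ <;> intro m l <;> simp [run]
  | succ n ih => exact daInv_step mk hU hB _ ih

end Invariant

/-- The matching produced by user-proposing deferred acceptance
(with quotas and strict preferences) is stable: no blocking pair exists. -/
theorem da_stable {M L : Type*} [Fintype M] [Fintype L] (mk : Market M L)
    (hU : ∀ m, (mk.uPref m).Nodup) (hB : ∀ l, Function.Injective (mk.bRank l))
    (n : ℕ) (hterm : Market.step mk (Market.run mk n) = Market.run mk n) :
    Market.IsStable mk (Market.run mk n).hold := by
  set s := Market.run mk n with hs
  obtain ⟨h1, h2, h3, h4, h5⟩ := daInv_run mk hU hB n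
  have hholdeq : ∀ l, s.hold l
      = Market.topQ (mk.quota l) (mk.bRank l) (s.hold l ∪ Market.proposalsTo mk s l) := by
    intro l
    conv_lhs => rw [← hterm]
    rfl
  have hpropeq : ∀ m, s.proposed m
      = if Market.matched s m then s.proposed m
        else match Market.nextProposal mk s m with
          | some l => insert l (s.proposed m)
          | none => s.proposed m := by
    intro m
    conv_lhs => rw [← hterm]
    rfl
  have hcard : ∀ l, (s.hold l).card ≤ mk.quota l := by
    intro l
    rw [hholdeq l]
    have := Market.topQ_card (mk.quota l) (mk.bRank l) (hB l) (s.hold l ∪ Market.proposalsTo mk s l)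
    calc (Market.topQ (mk.quota l) (mk.bRank l) _).card
        = min (mk.quota l) _ := this
      _ ≤ mk.quota l := min_le_left _ _
  -- unmatched users have exhausted their lists
  have hexh : ∀ m, ¬ Market.matched s m → ∀ l ∈ mk.uPref m, l ∈ s.proposed m := by
    intro m hunm l hl
    have hp := hpropeq m
    rw [if_neg hunm] at hp
    cases hnext : Market.nextProposal mk s m with
    | none =>
      have := List.find?_eq_none.1 hnext l hl
      simpa using this
    | some l1 =>
      rw [hnext] at hp
      have hl1 : l1 ∈ s.proposed m := hp ▸ Finset.mem_insert_self _ _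
      have := List.find?_some hnext
      simp at this
      exact absurd hl1 this
  constructor
  · exact ⟨hcard, h1⟩
  constructor
  · exact fun l m hm => h3 m l (h2 m l hm)
  · rintro m l ⟨hacc, hnot, hpref, hlast⟩
    -- first: l ∈ s.proposed m
    have hlp : l ∈ s.proposed m := by
      by_cases hmat : Market.matched s m
      · obtain ⟨l'', hm''⟩ := hmat
        obtain ⟨-, hidx⟩ := hpref l'' hm''
        exact h4 m l l'' hacc (h2 m l'' hm'') hidx
      · exact hexh m hmat l hacc
    have hrej := h5 m l hlp hnot
    have hsubf : (s.hold l).filter (fun m' => mk.bRank l m' < mk.bRank l m) ⊆ s.hold l :=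
      Finset.filter_subset _ _
    have hfull : ((s.hold l).filter (fun m' => mk.bRank l m' < mk.bRank l m)) = s.hold l :=
      Finset.eq_of_subset_of_card_le hsubf (le_trans (hcard l) hrej)
    rcases hlast with hfree | ⟨m', hm', hrk⟩
    · have : mk.quota l ≤ (s.hold l).card :=
        le_trans hrej (Finset.card_le_card hsubf)
      omega
    · have : m' ∈ (s.hold l).filter (fun m' => mk.bRank l m' < mk.bRank l m) :=
        hfull.symm ▸ hm'
      have := (Finset.mem_filter.1 this).2
      omega
end

section
/- The user-proposing deferred acceptance algorithm yields a user-optimal stable matching: every user weakly prefers its assignment under the DA outcome to its assignment under any other stable matching. -/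
open scoped Classical

section ListAux

variable {α : Type*}

lemma findIdx_inj_aux (L : List α) (a b : α) (ha : a ∈ L)
    (h : L.findIdx (fun x => decide (x = a)) = L.findIdx (fun x => decide (x = b))) :
    a = b := by
  induction L with
  | nil => simp at ha
  | cons c tl ih =>
    rw [List.findIdx_cons, List.findIdx_cons] at h
    by_cases hca : c = a
    · by_cases hcb : c = b
      · exact hca ▸ hcb
      · by_cases hab : a = b
        · exact hab
        · simp [hca, hcb, hab, Ne.symm hab] at h
    · by_cases hcb : c = b
      · by_cases hab : a = b
        · exact hab
        · simp [hca, hcb, hab, Ne.symm hab] at h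
      · simp only [hca, hcb, decide_eq_true_eq, if_false, decide_false, cond_false] at h
        have ha' : a ∈ tl := by
          rcases List.mem_cons.1 ha with h' | h'
          · exact absurd h'.symm hca
          · exact h'
        exact ih ha' (by omega)

lemma find?_earlier (L : List α) (p : α → Bool) (b a : α)
    (hfind : L.find? p = some b) (ha : a ∈ L)
    (hlt : L.findIdx (fun x => decide (x = a)) < L.findIdx (fun x => decide (x = b))) :
    p a = false := by
  induction L with
  | nil => simp at ha
  | cons c tl ih =>
    by_cases hpc : p c
    · rw [List.find?_cons_of_pos hpc] at hfind
      have hb : b = c := (Option.some.inj hfind).symm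
      subst hb
      simp [List.findIdx_cons] at hlt
    · rw [List.find?_cons_of_neg hpc] at hfind
      by_cases hca : c = a
      · subst hca; simpa using hpc
      · have ha' : a ∈ tl := by
          rcases List.mem_cons.1 ha with h' | h'
          · exact absurd h'.symm hca
          · exact h'
        have hpb : p b = true := List.find?_some hfind
        have hcb : c ≠ b := fun h => by rw [h] at hpc; exact hpc hpb
        rw [List.findIdx_cons, List.findIdx_cons] at hlt
        simp only [hca, hcb, decide_eq_true_eq, if_false, decide_false, cond_false] at hlt
        exact ih hfind ha' (by omega)

end ListAux

namespace Market

variable {M L : Type*} [Fintype M] [Fintype L]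

lemma mem_proposalsTo {mk : Market M L} {s : DAState M L} {l : L} {m : M} :
    m ∈ proposalsTo mk s l ↔ ¬ matched s m ∧ nextProposal mk s m = some l := by
  simp [proposalsTo]

lemma nextProposal_mem {mk : Market M L} {s : DAState M L} {m : M} {l : L}
    (h : nextProposal mk s m = some l) : l ∈ mk.uPref m :=
  List.mem_of_find?_eq_some h

lemma nextProposal_not_proposed {mk : Market M L} {s : DAState M L} {m : M} {l : L}
    (h : nextProposal mk s m = some l) : l ∉ s.proposed m := by
  have := List.find?_some h
  simpa using this

/-- If `m` prefers `l'` to the next proposal `l`, then `m` already proposed to `l'`. -/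
lemma nextProposal_earlier {mk : Market M L} {s : DAState M L} {m : M} {l l' : L}
    (h : nextProposal mk s m = some l) (hl' : l' ∈ mk.uPref m)
    (hlt : (mk.uPref m).findIdx (fun x => decide (x = l')) <
      (mk.uPref m).findIdx (fun x => decide (x = l))) :
    l' ∈ s.proposed m := by
  have := find?_earlier (mk.uPref m) _ l l' h hl' hlt
  simpa using this

/-- Invariants preserved along the run of deferred acceptance, relative to a
fixed stable matching `μ`. -/
structure Inv (mk : Market M L) (μ : L → Finset M) (s : DAState M L) : Prop where
  holdDisj : ∀ m l l', m ∈ s.hold l → m ∈ s.hold l' → l = l'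
  holdProp : ∀ m l, m ∈ s.hold l → l ∈ s.proposed m
  propMem : ∀ m l, l ∈ s.proposed m → l ∈ mk.uPref m
  propDown : ∀ m l l', l' ∈ s.proposed m → mk.uPrefers m l l' → l ∈ s.proposed m
  stableHold : ∀ m l, m ∈ μ l → l ∈ s.proposed m → m ∈ s.hold l

lemma mem_proposed_step {mk : Market M L} {s : DAState M L} {m : M} {l : L} :
    l ∈ (step mk s).proposed m ↔
      l ∈ s.proposed m ∨ (¬ matched s m ∧ nextProposal mk s m = some l) := by
  show l ∈ (if matched s m then s.proposed m else
      match nextProposal mk s m with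
      | some l0 => insert l0 (s.proposed m)
      | none => s.proposed m) ↔ _
  by_cases hm : matched s m
  · simp [hm]
  · rw [if_neg hm]
    cases h : nextProposal mk s m with
    | none => simp [hm]
    | some l0 =>
      simp only [Finset.mem_insert]
      constructor
      · rintro (rfl | hmem)
        · exact Or.inr ⟨hm, rfl⟩
        · exact Or.inl hmem
      · rintro (hmem | ⟨-, h'⟩)
        · exact Or.inr hmem
        · exact Or.inl (Option.some.inj h').symm

lemma mem_hold_step {mk : Market M L} {s : DAState M L} {m : M} {l : L} :
    m ∈ (step mk s).hold l ↔
      m ∈ (s.hold l ∪ proposalsTo mk s l) ∧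
        ((s.hold l ∪ proposalsTo mk s l).filter
          (fun m' => mk.bRank l m' < mk.bRank l m)).card < mk.quota l := by
  show m ∈ topQ _ _ _ ↔ _
  simp [topQ]

lemma inv_step {mk : Market M L} {μ : L → Finset M} {s : DAState M L}
    (hstable : IsStable mk μ) (inv : Inv mk μ s) : Inv mk μ (step mk s) := by
  have hpool : ∀ m l, m ∈ s.hold l ∪ proposalsTo mk s l → l ∈ (step mk s).proposed m := by
    intro m l hm
    rcases Finset.mem_union.1 hm with h | h
    · exact mem_proposed_step.2 (Or.inl (inv.holdProp m l h))
    · exact mem_proposed_step.2 (Or.inr (mem_proposalsTo.1 h))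
  have hpoolPref : ∀ m l, m ∈ s.hold l ∪ proposalsTo mk s l → l ∈ mk.uPref m := by
    intro m l hm
    rcases Finset.mem_union.1 hm with h | h
    · exact inv.propMem m l (inv.holdProp m l h)
    · exact nextProposal_mem (mem_proposalsTo.1 h).2
  -- if m is in the pool of l and prefers l'' to l, then m already proposed to l''
  have hpoolDown : ∀ m l l'', m ∈ s.hold l ∪ proposalsTo mk s l →
      mk.uPrefers m l'' l → l'' ∈ s.proposed m := by
    intro m l l'' hm hpref
    rcases Finset.mem_union.1 hm with h | h
    · exact inv.propDown m l'' l (inv.holdProp m l h) hpref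
    · exact nextProposal_earlier (mem_proposalsTo.1 h).2 hpref.1 hpref.2
  -- a pool member of l which is matched by μ to some l'' ≠ l prefers l to l''
  have hpoolBlock : ∀ m l l'', m ∈ s.hold l ∪ proposalsTo mk s l →
      m ∈ μ l'' → l'' ≠ l → mk.uPrefers m l l'' := by
    intro m l l'' hm hμ hne
    have hl : l ∈ mk.uPref m := hpoolPref m l hm
    have hl'' : l'' ∈ mk.uPref m := hstable.2.1 l'' m hμ
    refine ⟨hl, ?_⟩
    by_contra hle
    push_neg at hle
    have hne' : (mk.uPref m).findIdx (fun x => decide (x = l'')) ≠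
        (mk.uPref m).findIdx (fun x => decide (x = l)) := by
      intro h
      exact hne (findIdx_inj_aux _ _ _ hl'' h)
    have hpref'' : mk.uPrefers m l'' l := ⟨hl'', by omega⟩
    have hprop'' : l'' ∈ s.proposed m := hpoolDown m l l'' hm hpref''
    have hhold'' : m ∈ s.hold l'' := inv.stableHold m l'' hμ hprop''
    rcases Finset.mem_union.1 hm with h | h
    · exact hne (inv.holdDisj m l'' l hhold'' h)
    · exact (mem_proposalsTo.1 h).1 ⟨l'', hhold''⟩
  constructor
  · -- holdDisj
    intro m l l' hl hl'
    have hm1 := (mem_hold_step.1 hl).1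
    have hm2 := (mem_hold_step.1 hl').1
    rcases Finset.mem_union.1 hm1 with h1 | h1 <;> rcases Finset.mem_union.1 hm2 with h2 | h2
    · exact inv.holdDisj m l l' h1 h2
    · exact absurd ⟨l, h1⟩ (mem_proposalsTo.1 h2).1
    · exact absurd ⟨l', h2⟩ (mem_proposalsTo.1 h1).1
    · have e1 := (mem_proposalsTo.1 h1).2
      have e2 := (mem_proposalsTo.1 h2).2
      rw [e1] at e2; exact Option.some.inj e2
  · -- holdProp
    intro m l h
    exact hpool m l (mem_hold_step.1 h).1
  · -- propMem
    intro m l h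
    rcases mem_proposed_step.1 h with h | ⟨-, h⟩
    · exact inv.propMem m l h
    · exact nextProposal_mem h
  · -- propDown
    intro m l l' hl' hpref
    rcases mem_proposed_step.1 hl' with h | ⟨hmm, h⟩
    · exact mem_proposed_step.2 (Or.inl (inv.propDown m l l' h hpref))
    · -- l' is the next proposal of m
      exact mem_proposed_step.2 (Or.inl (nextProposal_earlier h hpref.1 hpref.2))
  · -- stableHold
    intro m l hμ hprop
    -- m is in the pool of l
    have hmp : m ∈ s.hold l ∪ proposalsTo mk s l := by
      by_cases hp : l ∈ s.proposed m
      · exact Finset.mem_union_left _ (inv.stableHold m l hμ hp)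
      · rcases mem_proposed_step.1 hprop with h | ⟨hmm, h⟩
        · exact absurd h hp
        · exact Finset.mem_union_right _ (mem_proposalsTo.2 ⟨hmm, h⟩)
    rw [mem_hold_step]
    refine ⟨hmp, ?_⟩
    by_contra hcard
    push_neg at hcard
    set pool := s.hold l ∪ proposalsTo mk s l with hpooldef
    set B := pool.filter (fun m' => mk.bRank l m' < mk.bRank l m) with hBdef
    -- find m' ∈ B with m' ∉ μ l
    have hq : (μ l).card ≤ mk.quota l := hstable.1.1 l
    have hex : ∃ m', m' ∈ B ∧ m' ∉ μ l := by
      by_contra hall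
      push_neg at hall
      have hsub : B ⊆ (μ l).erase m := by
        intro m' hm'
        have h1 : m' ∈ μ l := hall m' hm'
        have h2 : mk.bRank l m' < mk.bRank l m := (Finset.mem_filter.1 hm').2
        have : m' ≠ m := fun h => by rw [h] at h2; omega
        exact Finset.mem_erase.2 ⟨this, h1⟩
      have h1 : B.card ≤ ((μ l).erase m).card := Finset.card_le_card hsub
      have h2 : ((μ l).erase m).card = (μ l).card - 1 := Finset.card_erase_of_mem hμ
      have h3 : 1 ≤ (μ l).card := Finset.card_pos.2 ⟨m, hμ⟩
      omega
    obtain ⟨m', hm'B, hm'nμ⟩ := hex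
    have hm'pool : m' ∈ pool := Finset.mem_filter.1 hm'B |>.1
    have hm'rank : mk.bRank l m' < mk.bRank l m := (Finset.mem_filter.1 hm'B).2
    -- (m', l) blocks μ
    refine hstable.2.2 m' l ⟨hpoolPref m' l hm'pool, hm'nμ, ?_, Or.inr ⟨m, hμ, hm'rank⟩⟩
    intro l'' hμ''
    have hne : l'' ≠ l := fun h => hm'nμ (h ▸ hμ'')
    exact hpoolBlock m' l l'' hm'pool hμ'' hne

lemma inv_run {mk : Market M L} {μ : L → Finset M}
    (hstable : IsStable mk μ) (n : ℕ) : Inv mk μ (run mk n) := by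
  induction n with
  | zero =>
    refine ⟨?_, ?_, ?_, ?_, ?_⟩ <;> intro m l <;> simp [run]
  | succ n ih => exact inv_step hstable ih

end Market

/-- User-optimality of user-proposing deferred acceptance: for
every stable matching μ, every user weakly prefers its DA assignment to its
assignment under μ (if μ matches m to l, then DA matches m to some l' that m
weakly prefers to l). -/
theorem da_user_optimal {M L : Type*} [Fintype M] [Fintype L] (mk : Market M L)
    (hU : ∀ m, (mk.uPref m).Nodup) (hB : ∀ l, Function.Injective (mk.bRank l))
    (n : ℕ) (hterm : Market.step mk (Market.run mk n) = Market.run mk n)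
    (μ : L → Finset M) (hstable : Market.IsStable mk μ) :
    ∀ m l, m ∈ μ l →
      ∃ l', m ∈ (Market.run mk n).hold l' ∧
        (l' = l ∨ Market.uPrefers mk m l' l) := by
  intro m l hμ
  set s := Market.run mk n with hs
  have inv : Market.Inv mk μ s := Market.inv_run hstable n
  have hlU : l ∈ mk.uPref m := hstable.2.1 l m hμ
  -- first, m is matched at the terminal state
  have hmatched : Market.matched s m := by
    by_contra hnm
    cases hnp : Market.nextProposal mk s m with
    | some l0 =>
      -- step would add l0 to m's proposals, contradicting termination
      have h1 : l0 ∈ (Market.step mk s).proposed m :=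
        Market.mem_proposed_step.2 (Or.inr ⟨hnm, hnp⟩)
      rw [hterm] at h1
      exact Market.nextProposal_not_proposed hnp h1
    | none =>
      -- m has exhausted its list, in particular has proposed to l
      have hprop : l ∈ s.proposed m := by
        by_contra hp
        have : ∃ x ∈ mk.uPref m, (fun l' => decide (l' ∉ s.proposed m)) x = true :=
          ⟨l, hlU, by simpa using hp⟩
        rw [← List.find?_isSome] at this
        rw [Market.nextProposal] at hnp
        rw [hnp] at this
        simp at this
      exact hnm ⟨l, inv.stableHold m l hμ hprop⟩
  obtain ⟨l', hl'⟩ := hmatched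
  refine ⟨l', hl', ?_⟩
  by_cases hne : l' = l
  · exact Or.inl hne
  · right
    have hl'U : l' ∈ mk.uPref m := inv.propMem m l' (inv.holdProp m l' hl')
    refine ⟨hl'U, ?_⟩
    by_contra hle
    push_neg at hle
    have hne' : (mk.uPref m).findIdx (fun x => decide (x = l)) ≠
        (mk.uPref m).findIdx (fun x => decide (x = l')) := by
      intro h
      exact hne (findIdx_inj_aux _ _ _ hlU h).symm
    have hpref : Market.uPrefers mk m l l' := ⟨hlU, by omega⟩
    have hprop : l ∈ s.proposed m :=
      inv.propDown m l l' (inv.holdProp m l' hl') hpref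
    have hhold : m ∈ s.hold l := inv.stableHold m l hμ hprop
    exact hne (inv.holdDisj m l' l hl' hhold)
end
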